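/- For real numbers x and a with x > 0 and x^2 > a > 0, the following bounds hold: x + a/(2x) - a^2/(8x^3) + a^3/(16x^5) - 5a^4/(64x^7) < sqrt(x^2 + a) < x + a/(2x) - a^2/(8x^3) + a^3/(16x^5). -/

import Mathlib

theorem stmt_1 (x a : ℝ) (hx : 0 < x) (ha : 0 < a) (hxa : a < x ^ 2) :
    x + a / (2 * x) - a ^ 2 / (8 * x ^ 3) + a ^ 3 / (16 * x ^ 5)
        - 5 * a ^ 4 / (64 * x ^ 7) < Real.sqrt (x ^ 2 + a) ∧
    Real.sqrt (x ^ 2 + a) <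
      x + a / (2 * x) - a ^ 2 / (8 * x ^ 3) + a ^ 3 / (16 * x ^ 5) := by
  have hx2 : (0:ℝ) < x ^ 2 + a := by positivity
  set U : ℝ := x + a / (2 * x) - a ^ 2 / (8 * x ^ 3) + a ^ 3 / (16 * x ^ 5) with hU
  set L : ℝ := U - 5 * a ^ 4 / (64 * x ^ 7) with hL
  have hxne : x ≠ 0 := ne_of_gt hx
  have hLpos : 0 < L := by
    rw [hL, hU]
    have h1 : a / (2 * x) > 0 := by positivity
    have h2 : a ^ 2 / (8 * x ^ 3) < x / 8 := by
      rw [div_lt_div_iff₀ (by positivity) (by norm_num)]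
      nlinarith [sq_nonneg a, sq_nonneg x, mul_pos ha hx, sq_nonneg (a - x^2),
        mul_pos (mul_pos ha ha) hx, pow_pos hx 3]
    have h3 : a ^ 3 / (16 * x ^ 5) > 0 := by positivity
    have h4 : 5 * a ^ 4 / (64 * x ^ 7) < 5 * x / 64 := by
      rw [div_lt_div_iff₀ (by positivity) (by norm_num)]
      have : a ^ 4 < x ^ 8 := by
        calc a ^ 4 < (x ^ 2) ^ 4 := by gcongr
          _ = x ^ 8 := by ring
      nlinarith [pow_pos hx 7, pow_pos hx 8]
    nlinarith
  have hUpos : 0 < U := by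
    have : L < U := by
      rw [hL]; have : 5 * a ^ 4 / (64 * x ^ 7) > 0 := by positivity
      linarith
    linarith
  constructor
  · have hsq : L ^ 2 < x ^ 2 + a := by
      rw [hL, hU]
      have h4 : a ^ 4 < x ^ 8 := by
        calc a ^ 4 < (x ^ 2) ^ 4 := by gcongr
          _ = x ^ 8 := by ring
      field_simp
      ring_nf
      have e1 : a ^ 8 * x ^ 18 < a ^ 7 * x ^ 20 := by
        have := mul_lt_mul_of_pos_right hxa (mul_pos (pow_pos ha 7) (pow_pos hx 18))
        nlinarith
      have e2 : a ^ 7 * x ^ 20 < a ^ 6 * x ^ 22 := by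
        have := mul_lt_mul_of_pos_right hxa (mul_pos (pow_pos ha 6) (pow_pos hx 20))
        nlinarith
      have e3 : a ^ 6 * x ^ 22 < a ^ 5 * x ^ 24 := by
        have := mul_lt_mul_of_pos_right hxa (mul_pos (pow_pos ha 5) (pow_pos hx 22))
        nlinarith
      have e4 : a ^ 5 * x ^ 24 < a ^ 4 * x ^ 26 := by
        have := mul_lt_mul_of_pos_right hxa (mul_pos (pow_pos ha 4) (pow_pos hx 24))
        nlinarith
      nlinarith [e1, e2, e3, e4, mul_pos (pow_pos ha 7) (pow_pos hx 20),
        mul_pos (pow_pos ha 5) (pow_pos hx 24),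
        mul_lt_mul_of_pos_right hxa (pow_pos ha 7),
        mul_lt_mul_of_pos_right hxa (mul_pos (pow_pos ha 6) (pow_pos hx 2)),
        mul_lt_mul_of_pos_right hxa (mul_pos (pow_pos ha 5) (pow_pos hx 4)),
        mul_lt_mul_of_pos_right hxa (mul_pos (pow_pos ha 4) (pow_pos hx 6))]
    nlinarith [Real.sq_sqrt hx2.le, Real.sqrt_nonneg (x ^ 2 + a),
      Real.sqrt_pos.mpr hx2]
  · have hsq : x ^ 2 + a < U ^ 2 := by
      rw [hU]
      field_simp
      ring_nf
      nlinarith [mul_lt_mul_of_pos_right hxa (mul_pos (pow_pos ha 4) (pow_pos hx 10)),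
        mul_pos (pow_pos ha 6) (pow_pos hx 8),
        mul_pos (pow_pos ha 4) (pow_pos hx 12),
        mul_lt_mul_of_pos_right hxa (mul_pos (pow_pos ha 4) (pow_pos hx 2))]
    nlinarith [Real.sq_sqrt hx2.le, Real.sqrt_nonneg (x ^ 2 + a), hUpos]
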